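/- Fix an integer k ≥ 2. For every ε > 0 and every k-SAT formula F, there exist δ > 0 and n₀ such that for all n > n₀: if a k-SAT formula G on n variables contains at least ε·n^{v(F)} copies of F, then G contains at least δ·n^{2·v(F)} copies of the 2-blowup F[2]. -/

import Mathlib

section Defs

variable {V W : Type*}

/-- A clause is a finite set of literals; a literal is a variable paired with a polarity
(`true` = positive, `false` = negative). -/
abbrev SatClause (V : Type*) := Finset (V × Bool)

/-- A formula is a finite set of clauses. -/
abbrev SatFormula (V : Type*) := Finset (SatClause V)

/-- The set of variables used by a clause. -/
def clauseVars [DecidableEq V] (C : SatClause V) : Finset V := C.image Prod.fst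

/-- A valid `k`-SAT clause: `k` literals on `k` distinct variables. -/
def IsKClause [DecidableEq V] (k : ℕ) (C : SatClause V) : Prop :=
  C.card = k ∧ (clauseVars C).card = k

/-- A valid `k`-SAT formula. -/
def IsKFormula [DecidableEq V] (k : ℕ) (G : SatFormula V) : Prop :=
  ∀ C ∈ G, IsKClause k C

/-- An assignment satisfies a clause if it makes all of its literals true. -/
def SatisfiesClause (a : V → Bool) (C : SatClause V) : Prop := ∀ l ∈ C, a l.1 = l.2

/-- A formula is minimal if every clause has a witness assignment satisfying it and no other
clause. -/
def MinimalFormula (G : SatFormula V) : Prop :=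
  ∀ C ∈ G, ∃ w : V → Bool, SatisfiesClause w C ∧ ∀ C' ∈ G, SatisfiesClause w C' → C' = C

/-- A formula is simple if no two distinct clauses use the same set of variables. -/
def SimpleFormula [DecidableEq V] (G : SatFormula V) : Prop :=
  ∀ C ∈ G, ∀ C' ∈ G, clauseVars C = clauseVars C' → C = C'

/-- A formula is unate if every variable occurs with only one polarity. -/
def UnateFormula (G : SatFormula V) : Prop :=
  ∀ x : V, ¬ ((∃ C ∈ G, (x, true) ∈ C) ∧ (∃ C ∈ G, (x, false) ∈ C))

/-- The set of variables used by a formula. -/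
def formulaVars [DecidableEq V] (G : SatFormula V) : Finset V := G.biUnion clauseVars

/-- `f` is a `k`-SAT function: it is computed by some `k`-SAT formula (value `1` iff some
clause has all its literals satisfied). -/
def IsKSatFunction (k n : ℕ) (f : (Fin n → Bool) → Bool) : Prop :=
  ∃ G : SatFormula (Fin n), IsKFormula k G ∧
    ∀ a : Fin n → Bool, f a = true ↔ ∃ C ∈ G, SatisfiesClause a C

/-- Relabel the variables of a formula along `φ`. -/
def mapFormula [DecidableEq V] [DecidableEq W] (φ : W → V) (F : SatFormula W) : SatFormula V :=
  F.image (fun C => C.image (fun l => (φ l.1, l.2)))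

/-- `G'` is a copy of `F`: it is obtained from `F` by an injective relabeling of variables. -/
def IsCopyOf [DecidableEq V] [DecidableEq W] (F : SatFormula W) (G' : SatFormula V) : Prop :=
  ∃ φ : W → V, Set.InjOn φ ↑(formulaVars F) ∧ G' = mapFormula φ F

/-- The number of copies of `F` in `G`, i.e. of subformulae of `G` isomorphic to `F`. -/
noncomputable def copyCount [DecidableEq V] [DecidableEq W] (F : SatFormula W)
    (G : SatFormula V) : ℕ :=
  Set.ncard {G' : SatFormula V | G' ⊆ G ∧ IsCopyOf F G'}

/-- The `b`-blowup of a clause: replace each literal by the literal of the same polarity on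
one of the `b` duplicates of its variable, in all possible ways. -/
def clauseBlowup [DecidableEq V] (b : ℕ) (C : SatClause V) :
    Finset (SatClause (V × Fin b)) :=
  (C.pi (fun _ => (Finset.univ : Finset (Fin b)))).image
    (fun g => C.attach.image (fun l => ((l.1.1, g l.1 l.2), l.1.2)))

/-- The `b`-blowup of a formula. -/
def formulaBlowup [DecidableEq V] (b : ℕ) (G : SatFormula V) : SatFormula (V × Fin b) :=
  G.biUnion (clauseBlowup b)

/-- The weight of a formula on `n` variables:
`wt(G) = Σ_i log₂(i+1)·α_i(G)` where `α_i(G)·C(n,k)` counts the `k`-sets of variables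
supporting exactly `i` clauses. -/
noncomputable def formulaWt (k n : ℕ) (G : SatFormula (Fin n)) : ℝ :=
  (∑ S ∈ (Finset.univ : Finset (Fin n)).powersetCard k,
    Real.logb 2 (((G.filter (fun C => clauseVars C = S)).card : ℝ) + 1)) / (n.choose k)

/-- A partially directed graph: a set of undirected edges together with a set of directed
(pointed) edges. -/
structure PDG (V : Type*) where
  undir : Finset (Finset V)
  dir : Finset (Finset V × V)

/-- `H` is a valid `k`-PDG: all edges have `k` vertices, each directed edge is pointed at one
of its vertices, and each `k`-set carries at most one edge (undirected or directed). -/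
def PDG.IsValid (k : ℕ) (H : PDG V) : Prop :=
  (∀ e ∈ H.undir, e.card = k) ∧
  (∀ p ∈ H.dir, p.1.card = k ∧ p.2 ∈ p.1) ∧
  (∀ p ∈ H.dir, p.1 ∉ H.undir) ∧
  (∀ p ∈ H.dir, ∀ q ∈ H.dir, p.1 = q.1 → p = q)

/-- `F` is a subgraph of `H`: a copy of `F` can be obtained from `H` by deleting vertices,
deleting edges, and/or forgetting directions of edges. -/
def PDG.IsSubgraph [DecidableEq V] (F : PDG W) (H : PDG V) : Prop :=
  ∃ φ : W → V, Function.Injective φ ∧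
    (∀ e ∈ F.undir, e.image φ ∈ H.undir ∨ ∃ v, (e.image φ, v) ∈ H.dir) ∧
    (∀ p ∈ F.dir, (p.1.image φ, φ p.2) ∈ H.dir)

/-- The image of a PDG under a relabeling of vertices. -/
def PDG.map [DecidableEq V] (φ : W → V) (F : PDG W) : PDG V :=
  ⟨F.undir.image (Finset.image φ), F.dir.image (fun p => (p.1.image φ, φ p.2))⟩

/-- The PDG `T_k` on vertex set `{0, …, k}` (0-indexed): undirected edges everything-but-`k`
and everything-but-`k-2`, and the edge everything-but-`k-1` directed toward `k`. -/
def TkPDG (k : ℕ) : PDG (Fin (k + 1)) where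
  undir := { Finset.univ.erase ⟨k, Nat.lt_succ_self k⟩,
             Finset.univ.erase ⟨k - 2, by omega⟩ }
  dir := { (Finset.univ.erase ⟨k - 1, by omega⟩, ⟨k, Nat.lt_succ_self k⟩) }

/-- A semisimple formula: every `k`-set of variables supports at most one clause, or exactly
two clauses whose polarities differ on exactly one variable. -/
def SemisimpleFormula [DecidableEq V] (G : SatFormula V) : Prop :=
  ∀ C₁ ∈ G, ∀ C₂ ∈ G, C₁ ≠ C₂ → clauseVars C₁ = clauseVars C₂ →
    (((C₁ \ C₂).image Prod.fst).card = 1 ∧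
      ∀ C₃ ∈ G, clauseVars C₃ = clauseVars C₁ → C₃ = C₁ ∨ C₃ = C₂)

/-- The type of a (semisimple) formula: an undirected edge on each variable set supporting
exactly one clause, and for each variable set supporting two clauses a directed edge pointed
at the variable where the two clauses differ. -/
def formulaType [DecidableEq V] (G : SatFormula V) : PDG V where
  undir := (G.filter (fun C => ∀ C' ∈ G, clauseVars C' = clauseVars C → C' = C)).image
    clauseVars
  dir := ((G ×ˢ G).filter (fun p => p.1 ≠ p.2 ∧ clauseVars p.1 = clauseVars p.2)).biUnion
    (fun p => ((p.1 \ p.2).image Prod.fst).image (fun v => (clauseVars p.1, v)))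

end Defs


section AuxProofs
open Finset


private lemma sum_pi_succ {v : ℕ} {β M : Type*} [Fintype β] [AddCommMonoid M]
    (F : (Fin (v + 1) → β) → M) :
    ∑ x : Fin (v + 1) → β, F x = ∑ x0 : β, ∑ x' : Fin v → β, F (Fin.cons x0 x') :=
  calc ∑ x : Fin (v + 1) → β, F x
      = ∑ p : β × (Fin v → β), F (Fin.cons p.1 p.2) :=
        (Fintype.sum_equiv (Fin.consEquiv fun _ => β) _ _ fun p => rfl).symm
    _ = ∑ x0 : β, ∑ x' : Fin v → β, F (Fin.cons x0 x') := Fintype.sum_prod_type _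

private lemma prod_pi_succ {v : ℕ} {β M : Type*} [Fintype β] [CommMonoid M]
    (F : (Fin (v + 1) → β) → M) :
    ∏ x : Fin (v + 1) → β, F x = ∏ x0 : β, ∏ x' : Fin v → β, F (Fin.cons x0 x') :=
  calc ∏ x : Fin (v + 1) → β, F x
      = ∏ p : β × (Fin v → β), F (Fin.cons p.1 p.2) :=
        (Fintype.prod_equiv (Fin.consEquiv fun _ => β) _ _ fun p => rfl).symm
    _ = ∏ x0 : β, ∏ x' : Fin v → β, F (Fin.cons x0 x') := Fintype.prod_prod_type _

private lemma mix_cons {v n : ℕ} (σ0 : Fin 2) (σ' : Fin v → Fin 2) (a0 b0 : Fin n)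
    (a' b' : Fin v → Fin n) :
    (fun i => if (Fin.cons σ0 σ' : Fin (v+1) → Fin 2) i = 0
        then (Fin.cons a0 a' : Fin (v+1) → Fin n) i else (Fin.cons b0 b' : Fin (v+1) → Fin n) i)
      = Fin.cons (if σ0 = 0 then a0 else b0) (fun i => if σ' i = 0 then a' i else b' i) := by
  funext i
  induction i using Fin.cases with
  | zero => simp
  | succ j => simp

set_option maxHeartbeats 2000000 in
private lemma boxPairs (n : ℕ) : ∀ (v : ℕ) (f : (Fin v → Fin n) → ℝ), (∀ x, 0 ≤ f x) →
    (∑ x, f x) ^ (2 ^ v) * (n : ℝ) ^ (2 * v) ≤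
      (∑ a : Fin v → Fin n, ∑ b : Fin v → Fin n,
        ∏ σ : Fin v → Fin 2, f (fun i => if σ i = 0 then a i else b i)) * (n : ℝ) ^ (v * 2 ^ v) := by
  intro v
  induction v with
  | zero =>
    intro f hf
    simp only [pow_zero, Nat.mul_zero, Nat.zero_mul, pow_one, mul_one]
    rw [Fintype.sum_unique, Fintype.sum_unique, Fintype.sum_unique, Fintype.prod_unique]
    exact le_of_eq (congrArg f (Subsingleton.elim _ _))
  | succ v ih =>
    intro f hf
    rcases Nat.eq_zero_or_pos n with hn | hn
    · subst hn
      have h0 : IsEmpty (Fin (v+1) → Fin 0) := ⟨fun g => (g 0).elim0⟩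
      rw [Finset.univ_eq_empty (α := Fin (v+1) → Fin 0)]
      simp only [Finset.sum_empty, Nat.cast_zero]
      rw [zero_pow (by positivity), zero_pow (by positivity)]
      simp
    have hN0 : (0:ℝ) < (n:ℝ) := by exact_mod_cast hn
    set N := (n : ℝ) with hNdef
    set m := 2 ^ v with hm
    have hm1 : 1 ≤ m := Nat.one_le_two_pow
    set g : Fin n → Fin n → (Fin v → Fin n) → ℝ :=
      fun a0 b0 y => f (Fin.cons a0 y) * f (Fin.cons b0 y) with hg
    have hg0 : ∀ a0 b0 y, 0 ≤ g a0 b0 y := fun a0 b0 y => mul_nonneg (hf _) (hf _)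
    set S' : Fin n → Fin n → ℝ := fun a0 b0 => ∑ y, g a0 b0 y with hS'
    have hS'0 : ∀ a0 b0, 0 ≤ S' a0 b0 := fun a0 b0 => Finset.sum_nonneg fun y _ => hg0 _ _ _
    set Tv : Fin n → Fin n → ℝ := fun a0 b0 => ∑ a' : Fin v → Fin n, ∑ b' : Fin v → Fin n,
      ∏ σ' : Fin v → Fin 2, g a0 b0 (fun i => if σ' i = 0 then a' i else b' i) with hTv
    set S : ℝ := ∑ x : Fin (v+1) → Fin n, f x with hS
    set T : ℝ := ∑ a : Fin (v+1) → Fin n, ∑ b : Fin (v+1) → Fin n,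
      ∏ σ : Fin (v+1) → Fin 2, f (fun i => if σ i = 0 then a i else b i) with hT
    -- T decomposes
    have hTdec : T = ∑ a0 : Fin n, ∑ b0 : Fin n, Tv a0 b0 := by
      rw [hT, sum_pi_succ]
      refine Finset.sum_congr rfl fun a0 _ => ?_
      rw [show (∑ a' : Fin v → Fin n, ∑ b : Fin (v+1) → Fin n,
            ∏ σ : Fin (v+1) → Fin 2, f fun i => if σ i = 0 then (Fin.cons a0 a' : Fin (v+1) → Fin n) i else b i)
          = ∑ b : Fin (v+1) → Fin n, ∑ a' : Fin v → Fin n,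
            ∏ σ : Fin (v+1) → Fin 2, f fun i => if σ i = 0 then (Fin.cons a0 a' : Fin (v+1) → Fin n) i else b i
        from Finset.sum_comm]
      rw [sum_pi_succ (fun b => ∑ a' : Fin v → Fin n,
        ∏ σ : Fin (v+1) → Fin 2, f fun i => if σ i = 0 then (Fin.cons a0 a' : Fin (v+1) → Fin n) i else b i)]
      rw [show (∑ b0 : Fin n, ∑ b' : Fin v → Fin n, ∑ a' : Fin v → Fin n,
            ∏ σ : Fin (v+1) → Fin 2,
              f fun i => if σ i = 0 then (Fin.cons a0 a' : Fin (v+1) → Fin n) i else (Fin.cons b0 b' : Fin (v+1) → Fin n) i)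
          = ∑ b0 : Fin n, ∑ a' : Fin v → Fin n, ∑ b' : Fin v → Fin n,
            ∏ σ : Fin (v+1) → Fin 2,
              f fun i => if σ i = 0 then (Fin.cons a0 a' : Fin (v+1) → Fin n) i else (Fin.cons b0 b' : Fin (v+1) → Fin n) i
        from Finset.sum_congr rfl fun b0 _ => Finset.sum_comm]
      refine Finset.sum_congr rfl fun b0 _ => ?_
      refine Finset.sum_congr rfl fun a' _ => ?_
      refine Finset.sum_congr rfl fun b' _ => ?_
      rw [prod_pi_succ (fun σ => f fun i =>
        if σ i = 0 then (Fin.cons a0 a' : Fin (v+1) → Fin n) i else (Fin.cons b0 b' : Fin (v+1) → Fin n) i)]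
      rw [Fin.prod_univ_two]
      simp only [mix_cons, if_true]
      rw [if_neg (show ¬ (1 : Fin 2) = 0 by decide)]
      rw [← Finset.prod_mul_distrib]
    -- S decomposes
    set c : (Fin v → Fin n) → ℝ := fun y => ∑ a0 : Fin n, f (Fin.cons a0 y) with hc
    have hc0 : ∀ y, 0 ≤ c y := fun y => Finset.sum_nonneg fun a0 _ => hf _
    have hSdec : S = ∑ y, c y := by
      rw [hS, sum_pi_succ, Finset.sum_comm]
    have hUdec : (∑ a0 : Fin n, ∑ b0 : Fin n, S' a0 b0) = ∑ y, (c y) ^ 2 := by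
      simp only [hS', hg, hc]
      rw [show (∑ a0 : Fin n, ∑ b0 : Fin n, ∑ y : Fin v → Fin n,
            f (Fin.cons a0 y) * f (Fin.cons b0 y))
          = ∑ a0 : Fin n, ∑ y : Fin v → Fin n, ∑ b0 : Fin n,
            f (Fin.cons a0 y) * f (Fin.cons b0 y)
        from Finset.sum_congr rfl fun a0 _ => Finset.sum_comm]
      rw [Finset.sum_comm]
      refine Finset.sum_congr rfl fun y _ => ?_
      rw [sq, Finset.sum_mul_sum]
    set U : ℝ := ∑ a0 : Fin n, ∑ b0 : Fin n, S' a0 b0 with hU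
    have hU0 : 0 ≤ U := Finset.sum_nonneg fun _ _ => Finset.sum_nonneg fun _ _ => hS'0 _ _
    set B : ℝ := ∑ a0 : Fin n, ∑ b0 : Fin n, (S' a0 b0) ^ m with hB
    have hB0 : 0 ≤ B :=
      Finset.sum_nonneg fun _ _ => Finset.sum_nonneg fun _ _ => pow_nonneg (hS'0 _ _) _
    have hT0 : ∀ a0 b0, 0 ≤ Tv a0 b0 := fun a0 b0 =>
      Finset.sum_nonneg fun _ _ => Finset.sum_nonneg fun _ _ =>
        Finset.prod_nonneg fun _ _ => hg0 _ _ _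
    -- Cauchy-Schwarz : S^2 ≤ N^v * U
    have hCS : S ^ 2 ≤ N ^ v * U := by
      rw [hSdec, hUdec]
      have key := pow_sum_div_card_le_sum_pow (s := Finset.univ)
        (f := c) (fun y _ => hc0 y) 1
      rw [div_le_iff₀ (by
        rw [Finset.card_univ, Fintype.card_fun]
        simp only [Fintype.card_fin]
        positivity)] at key
      calc (∑ y, c y) ^ (1+1) ≤ (∑ y, c y ^ (1+1)) * ((Finset.univ.card : ℝ) ^ 1) := key
        _ = N ^ v * ∑ y, c y ^ 2 := by
            rw [Finset.card_univ, Fintype.card_fun]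
            simp only [Fintype.card_fin, pow_one]
            push_cast
            ring
    -- Power mean : U^m ≤ (N^2)^(m-1) * B
    have hPM : U ^ m ≤ (N ^ 2) ^ (m - 1) * B := by
      have key := pow_sum_div_card_le_sum_pow (s := (Finset.univ : Finset (Fin n × Fin n)))
        (f := fun p => S' p.1 p.2) (fun p _ => hS'0 _ _) (m - 1)
      rw [Nat.sub_add_cancel hm1] at key
      rw [div_le_iff₀ (by
        rw [Finset.card_univ, Fintype.card_prod]
        simp only [Fintype.card_fin]
        positivity)] at key
      calc U ^ m = (∑ p : Fin n × Fin n, S' p.1 p.2) ^ m := by rw [hU, Fintype.sum_prod_type]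
        _ ≤ (∑ p : Fin n × Fin n, (S' p.1 p.2) ^ m) * ((Finset.univ.card : ℝ) ^ (m-1)) := key
        _ = (N ^ 2) ^ (m - 1) * B := by
            rw [Finset.card_univ, Fintype.card_prod, hB, Fintype.sum_prod_type]
            simp only [Fintype.card_fin]
            push_cast
            ring_nf
            rw [hNdef]
    -- summed IH
    have hsumIH : B * N ^ (2 * v) ≤ T * N ^ (v * m) := by
      rw [hB, hTdec, Finset.sum_mul, Finset.sum_mul]
      refine Finset.sum_le_sum fun a0 _ => ?_
      rw [Finset.sum_mul, Finset.sum_mul]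
      exact Finset.sum_le_sum fun b0 _ => ih (g a0 b0) (hg0 a0 b0)
    -- final assembly
    have hexp1 : 2 ^ (v + 1) = 2 * m := by rw [hm, pow_succ]; ring
    have hexp2 : (v + 1) * 2 ^ (v + 1) = v * m + (2 * (m - 1) + 2 + v * m) := by
      rw [hexp1]
      rw [show 2 * (m - 1) + 2 + v * m = 2 * m + v * m from by omega]
      ring
    rw [hexp2, hexp1]
    calc S ^ (2 * m) * N ^ (2 * (v + 1))
        = (S ^ 2) ^ m * (N ^ (2 * v) * N ^ 2) := by
          rw [pow_mul, ← pow_add]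
          ring_nf
      _ ≤ (N ^ v * U) ^ m * (N ^ (2 * v) * N ^ 2) := by
          have := pow_le_pow_left₀ (sq_nonneg S) hCS m
          exact mul_le_mul_of_nonneg_right this (by positivity)
      _ = (U ^ m * N ^ (2 * v)) * (N ^ (v * m) * N ^ 2) := by
          rw [mul_pow, ← pow_mul]
          ring
      _ ≤ (((N ^ 2) ^ (m - 1) * B) * N ^ (2 * v)) * (N ^ (v * m) * N ^ 2) := by
          refine mul_le_mul_of_nonneg_right (mul_le_mul_of_nonneg_right hPM (by positivity))
            (by positivity)
      _ = (B * N ^ (2 * v)) * ((N ^ 2) ^ (m - 1) * N ^ (v * m) * N ^ 2) := by ring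
      _ ≤ (T * N ^ (v * m)) * ((N ^ 2) ^ (m - 1) * N ^ (v * m) * N ^ 2) := by
          refine mul_le_mul_of_nonneg_right hsumIH (by positivity)
      _ = T * N ^ (v * m + (2 * (m - 1) + 2 + v * m)) := by
          rw [pow_add, pow_add, pow_add, ← pow_mul]
          ring

set_option maxHeartbeats 1000000 in
private lemma boxCard (n v : ℕ) (E : Finset (Fin v → Fin n)) :
    ((E.card : ℝ)) ^ (2 ^ v) * (n : ℝ) ^ (2 * v) ≤
      (((Finset.univ.filter (fun ab : (Fin v → Fin n) × (Fin v → Fin n) =>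
        ∀ σ : Fin v → Fin 2, (fun i => if σ i = 0 then ab.1 i else ab.2 i) ∈ E)).card : ℝ))
        * (n : ℝ) ^ (v * 2 ^ v) := by
  have hf0 : ∀ e : Fin v → Fin n, 0 ≤ (if e ∈ E then (1:ℝ) else 0) := fun e => by positivity
  have hbox := boxPairs n v (fun e => if e ∈ E then (1:ℝ) else 0) hf0
  have hfsum : (∑ e : Fin v → Fin n, if e ∈ E then (1:ℝ) else 0) = (E.card : ℝ) := by
    rw [Finset.sum_boole]
    congr 1
    simp
  have hprod : ∀ ab : (Fin v → Fin n) × (Fin v → Fin n),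
      (∏ σ : Fin v → Fin 2,
        if (fun i => if σ i = 0 then ab.1 i else ab.2 i) ∈ E then (1:ℝ) else 0) =
      if (∀ σ : Fin v → Fin 2, (fun i => if σ i = 0 then ab.1 i else ab.2 i) ∈ E)
        then (1:ℝ) else 0 := by
    intro ab
    by_cases h : ∀ σ : Fin v → Fin 2, (fun i => if σ i = 0 then ab.1 i else ab.2 i) ∈ E
    · rw [if_pos h]
      exact Finset.prod_eq_one fun σ _ => by rw [if_pos (h σ)]
    · rw [if_neg h]
      push_neg at h
      obtain ⟨σ0, hσ0⟩ := h
      exact Finset.prod_eq_zero (Finset.mem_univ σ0) (by rw [if_neg hσ0])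
  have hTGood : (∑ a : Fin v → Fin n, ∑ b : Fin v → Fin n,
      ∏ σ : Fin v → Fin 2,
        if (fun i => if σ i = 0 then a i else b i) ∈ E then (1:ℝ) else 0)
      = (((Finset.univ.filter (fun ab : (Fin v → Fin n) × (Fin v → Fin n) =>
        ∀ σ : Fin v → Fin 2, (fun i => if σ i = 0 then ab.1 i else ab.2 i) ∈ E)).card : ℝ)) := by
    calc (∑ a : Fin v → Fin n, ∑ b : Fin v → Fin n,
          ∏ σ : Fin v → Fin 2,
            if (fun i => if σ i = 0 then a i else b i) ∈ E then (1:ℝ) else 0)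
        = ∑ ab : (Fin v → Fin n) × (Fin v → Fin n),
          ∏ σ : Fin v → Fin 2,
            if (fun i => if σ i = 0 then ab.1 i else ab.2 i) ∈ E then (1:ℝ) else 0 :=
          (Fintype.sum_prod_type (fun ab : (Fin v → Fin n) × (Fin v → Fin n) =>
            ∏ σ : Fin v → Fin 2,
              if (fun i => if σ i = 0 then ab.1 i else ab.2 i) ∈ E then (1:ℝ) else 0)).symm
      _ = ∑ ab : (Fin v → Fin n) × (Fin v → Fin n),
          if (∀ σ : Fin v → Fin 2, (fun i => if σ i = 0 then ab.1 i else ab.2 i) ∈ E)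
            then (1:ℝ) else 0 := Finset.sum_congr rfl fun ab _ => hprod ab
      _ = _ := by rw [Finset.sum_boole]
  rw [hfsum, hTGood] at hbox
  exact hbox

private lemma mapFormula_congr' {W V : Type*} [DecidableEq W] [DecidableEq V]
    (F : SatFormula W) {φ ψ : W → V} (h : ∀ x ∈ formulaVars F, φ x = ψ x) :
    mapFormula φ F = mapFormula ψ F := by
  unfold mapFormula
  refine Finset.image_congr fun C hC => ?_
  refine Finset.image_congr fun l hl => ?_
  have hx : l.1 ∈ formulaVars F :=
    Finset.mem_biUnion.mpr ⟨C, hC, Finset.mem_image_of_mem _ hl⟩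
  rw [h _ hx]

private lemma formulaVars_mapFormula' {W V : Type*} [DecidableEq W] [DecidableEq V]
    (φ : W → V) (F : SatFormula W) :
    formulaVars (mapFormula φ F) = (formulaVars F).image φ := by
  ext y
  simp only [formulaVars, mapFormula, clauseVars, Finset.mem_biUnion, Finset.mem_image]
  constructor
  · rintro ⟨C, ⟨C₀, hC₀, rfl⟩, l, hl, rfl⟩
    obtain ⟨l₀, hl₀, rfl⟩ := Finset.mem_image.mp hl
    exact ⟨l₀.1, ⟨C₀, hC₀, l₀, hl₀, rfl⟩, rfl⟩
  · rintro ⟨x, ⟨C₀, hC₀, l₀, hl₀, rfl⟩, rfl⟩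
    exact ⟨C₀.image (fun l => (φ l.1, l.2)), ⟨C₀, hC₀, rfl⟩,
      (φ l₀.1, l₀.2), Finset.mem_image_of_mem _ hl₀, rfl⟩

private lemma formulaVars_blowup' {W : Type*} [DecidableEq W] (F : SatFormula W) :
    formulaVars (formulaBlowup 2 F) = (formulaVars F) ×ˢ (Finset.univ : Finset (Fin 2)) := by
  ext p
  constructor
  · intro hp
    obtain ⟨D, hD, hpD⟩ := Finset.mem_biUnion.mp hp
    obtain ⟨C, hC, hDC⟩ := Finset.mem_biUnion.mp hD
    obtain ⟨g, hg, rfl⟩ := Finset.mem_image.mp hDC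
    obtain ⟨l, hl, rfl⟩ := Finset.mem_image.mp hpD
    obtain ⟨l₀, hl₀, rfl⟩ := Finset.mem_image.mp hl
    refine Finset.mem_product.mpr ⟨?_, Finset.mem_univ _⟩
    exact Finset.mem_biUnion.mpr ⟨C, hC, Finset.mem_image_of_mem _ l₀.2⟩
  · intro hp
    obtain ⟨hp1, -⟩ := Finset.mem_product.mp hp
    obtain ⟨C, hC, hpC⟩ := Finset.mem_biUnion.mp hp1
    obtain ⟨l₀, hl₀, hfst⟩ := Finset.mem_image.mp hpC
    refine Finset.mem_biUnion.mpr
      ⟨C.attach.image (fun l => ((l.1.1, (fun _ _ => p.2 : ∀ a ∈ C, Fin 2) l.1 l.2), l.1.2)), ?_, ?_⟩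
    · refine Finset.mem_biUnion.mpr ⟨C, hC, Finset.mem_image.mpr
        ⟨fun _ _ => p.2, Finset.mem_pi.mpr (fun a _ => Finset.mem_univ _), rfl⟩⟩
    · refine Finset.mem_image.mpr ⟨((l₀.1, p.2), l₀.2), ?_, ?_⟩
      · exact Finset.mem_image.mpr ⟨⟨l₀, hl₀⟩, Finset.mem_attach _ _, rfl⟩
      · exact Prod.ext hfst rfl

private lemma blowclause_image' {W : Type*} [DecidableEq W] {n : ℕ} (Φ : W × Fin 2 → Fin n)
    (C : SatClause W) (hinj : Set.InjOn Prod.fst (C : Set (W × Bool)))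
    (D : SatClause (W × Fin 2)) (hD : D ∈ clauseBlowup 2 C) :
    ∃ s : W → Fin 2,
      D.image (fun l => (Φ l.1, l.2)) = C.image (fun l => (Φ (l.1, s l.1), l.2)) := by
  classical
  obtain ⟨g, hg, rfl⟩ := Finset.mem_image.mp hD
  refine ⟨fun x => if h : ∃ b, (x, b) ∈ C then g (x, h.choose) h.choose_spec else 0, ?_⟩
  have key : ∀ (a : W × Bool) (ha : a ∈ C),
      (if h : ∃ b, (a.1, b) ∈ C then g (a.1, h.choose) h.choose_spec else 0) = g a ha := by
    intro a ha
    have hex : ∃ b, (a.1, b) ∈ C := ⟨a.2, by rwa [Prod.mk.eta]⟩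
    rw [dif_pos hex]
    have hchoose : (a.1, hex.choose) = a := hinj hex.choose_spec ha rfl
    have gval : ∀ (b : W × Bool) (hb : b ∈ C),
        g b hb = if hb' : b ∈ C then g b hb' else 0 := fun b hb => (dif_pos hb).symm
    rw [gval _ hex.choose_spec, gval _ ha, hchoose]
  rw [Finset.image_image]
  ext y
  simp only [Finset.mem_image, Finset.mem_attach, true_and, Subtype.exists, Function.comp]
  constructor
  · rintro ⟨a, ha, rfl⟩
    exact ⟨a, ha, by rw [key a ha]⟩
  · rintro ⟨a, ha, rfl⟩
    exact ⟨a, ha, by rw [key a ha]⟩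
private def xiFun {n v : ℕ} (ab : (Fin v → Fin n) × (Fin v → Fin n)) : Fin v × Fin 2 → Fin n :=
  fun p => if p.2 = 0 then ab.1 p.1 else ab.2 p.1

private lemma xiFun_zero {n v : ℕ} (ab : (Fin v → Fin n) × (Fin v → Fin n)) (i : Fin v) :
    xiFun ab (i, 0) = ab.1 i := if_pos rfl

private lemma xiFun_one {n v : ℕ} (ab : (Fin v → Fin n) × (Fin v → Fin n)) (i : Fin v) :
    xiFun ab (i, 1) = ab.2 i := by
  have h : ¬ ((i, (1 : Fin 2)) : Fin v × Fin 2).2 = 0 := by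
    show ¬ (1 : Fin 2) = 0
    decide
  exact if_neg h

private lemma xiFun_injective {n v : ℕ} :
    Function.Injective (xiFun (n := n) (v := v)) := by
  intro ab ab' h
  have h1 : ab.1 = ab'.1 := funext fun i => by rw [← xiFun_zero ab i, ← xiFun_zero ab' i, h]
  have h2 : ab.2 = ab'.2 := funext fun i => by rw [← xiFun_one ab i, ← xiFun_one ab' i, h]
  exact Prod.ext h1 h2

private def extFun {W : Type*} [DecidableEq W] {n v : ℕ} (V : Finset W) (θ : ↥V ≃ Fin v)
    (x₀ : ↥V) (e : Fin v → Fin n) : W → Fin n :=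
  fun w => if h : w ∈ V then e (θ ⟨w, h⟩) else e (θ x₀)

private lemma extFun_mem {W : Type*} [DecidableEq W] {n v : ℕ} {V : Finset W} (θ : ↥V ≃ Fin v)
    (x₀ : ↥V) (e : Fin v → Fin n) {x : W} (hx : x ∈ V) :
    extFun V θ x₀ e x = e (θ ⟨x, hx⟩) := dif_pos hx

private def phiFun {W : Type*} [DecidableEq W] {n v : ℕ} (V : Finset W) (θ : ↥V ≃ Fin v)
    (x₀ : ↥V) (h : Fin v × Fin 2 → Fin n) : W × Fin 2 → Fin n :=
  fun p => if hp : p.1 ∈ V then h (θ ⟨p.1, hp⟩, p.2) else h (θ x₀, p.2)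

private lemma phiFun_mem {W : Type*} [DecidableEq W] {n v : ℕ} {V : Finset W} (θ : ↥V ≃ Fin v)
    (x₀ : ↥V) (h : Fin v × Fin 2 → Fin n) {p : W × Fin 2} (hp : p.1 ∈ V) :
    phiFun V θ x₀ h p = h (θ ⟨p.1, hp⟩, p.2) := dif_pos hp

private lemma clause_fst_injOn {W : Type*} [DecidableEq W] {k : ℕ} {C : SatClause W}
    (h : IsKClause k C) : Set.InjOn Prod.fst (C : Set (W × Bool)) := by
  apply Finset.injOn_of_card_image_eq
  rw [show C.image Prod.fst = clauseVars C from rfl, h.2, h.1]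

end AuxProofs

set_option maxHeartbeats 2000000

/-- Fix `k ≥ 2`. For every `ε > 0` and every `k`-SAT formula `F`, there
exist `δ > 0` and `n₀` such that for all `n > n₀`: if a `k`-SAT formula `G` on `n` variables
contains at least `ε·n^{v(F)}` copies of `F`, then `G` contains at least `δ·n^{2·v(F)}`
copies of the 2-blowup `F[2]`. -/
theorem blowup_supersaturation (k : ℕ) (hk : 2 ≤ k) {W : Type*} [DecidableEq W]
    (ε : ℝ) (hε : 0 < ε) (F : SatFormula W) (hF : IsKFormula k F) :
    ∃ δ : ℝ, 0 < δ ∧ ∃ n₀ : ℕ, ∀ n > n₀, ∀ G : SatFormula (Fin n), IsKFormula k G →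
      ε * n ^ (formulaVars F).card ≤ (copyCount F G : ℝ) →
      δ * n ^ (2 * (formulaVars F).card) ≤ (copyCount (formulaBlowup 2 F) G : ℝ) := by
  classical
  by_cases hF0 : F = ∅
  · -- degenerate case : F is the empty formula
    subst hF0
    refine ⟨1, one_pos, 0, fun n hn G hG _ => ?_⟩
    have hvars : formulaVars (∅ : SatFormula W) = ∅ := rfl
    have hblow : formulaBlowup 2 (∅ : SatFormula W) = ∅ := rfl
    have hset : {G' : SatFormula (Fin n) | G' ⊆ G ∧
        IsCopyOf (formulaBlowup 2 (∅ : SatFormula W)) G'} = {∅} := by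
      ext G'
      simp only [Set.mem_setOf_eq, Set.mem_singleton_iff, hblow, IsCopyOf]
      constructor
      · rintro ⟨-, φ, -, rfl⟩
        simp [mapFormula]
      · rintro rfl
        exact ⟨Finset.empty_subset _, fun _ => (⟨0, hn⟩ : Fin n), by simp [formulaVars],
          by simp [mapFormula]⟩
    rw [show copyCount (formulaBlowup 2 (∅ : SatFormula W)) G
        = Set.ncard {G' : SatFormula (Fin n) | G' ⊆ G ∧
            IsCopyOf (formulaBlowup 2 (∅ : SatFormula W)) G'} from rfl, hset,
      Set.ncard_singleton]
    simp [hvars]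
  · -- main case
    have hFne : F.Nonempty := Finset.nonempty_iff_ne_empty.mpr hF0
    obtain ⟨C₀, hC₀⟩ := hFne
    have hvarsne : (clauseVars C₀).Nonempty := by
      rw [← Finset.card_pos, (hF C₀ hC₀).2]; omega
    obtain ⟨x₀, hx₀C⟩ := hvarsne
    have hx₀ : x₀ ∈ formulaVars F := Finset.mem_biUnion.mpr ⟨C₀, hC₀, hx₀C⟩
    set V : Finset W := formulaVars F with hVdef
    set v : ℕ := V.card with hvdef
    have hv1 : 1 ≤ v := Finset.card_pos.mpr ⟨x₀, hx₀⟩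
    set θ : ↥V ≃ Fin v := V.equivFin with hθ
    set x₀s : ↥V := ⟨x₀, hx₀⟩ with hx₀s
    set K : ℝ := ε ^ (2 ^ v) with hKdef
    have hK0 : 0 < K := pow_pos hε _
    set M : ℝ := ((2 * v : ℕ) : ℝ) ^ (2 * v) with hMdef
    have h2v0 : (0:ℝ) < ((2 * v : ℕ) : ℝ) := by exact_mod_cast Nat.pos_of_ne_zero (by omega)
    have hM0 : 0 < M := pow_pos h2v0 _
    refine ⟨K / (2 * M), by positivity, max 1 ⌈2 * ((2 * v : ℕ) : ℝ) ^ 2 / K⌉₊, ?_⟩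
    intro n hn G hG hcnt
    have hn1 : 1 ≤ n := le_trans (le_max_left _ _) hn.le
    have hN0 : (0:ℝ) < (n:ℝ) := by exact_mod_cast hn1
    have hNlarge : 2 * ((2 * v : ℕ) : ℝ) ^ 2 / K < (n : ℝ) := by
      calc 2 * ((2 * v : ℕ) : ℝ) ^ 2 / K ≤ (⌈2 * ((2 * v : ℕ) : ℝ) ^ 2 / K⌉₊ : ℝ) :=
            Nat.le_ceil _
        _ ≤ ((max 1 ⌈2 * ((2 * v : ℕ) : ℝ) ^ 2 / K⌉₊ : ℕ) : ℝ) := by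
            exact_mod_cast le_max_right _ _
        _ < (n : ℝ) := by exact_mod_cast hn
    -- embeddings
    set Emb : Finset (Fin v → Fin n) :=
      Finset.univ.filter (fun e => mapFormula (extFun V θ x₀s e) F ⊆ G) with hEmbDef
    -- Step A : many embeddings
    have hEmbS : ε * (n:ℝ) ^ v ≤ (Emb.card : ℝ) := by
      have hsub : {G' : SatFormula (Fin n) | G' ⊆ G ∧ IsCopyOf F G'} ⊆
          (fun e => mapFormula (extFun V θ x₀s e) F) '' ↑Emb := by
        rintro G' ⟨hsubG, φ, hinjφ, rfl⟩
        have hagree : ∀ x ∈ formulaVars F,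
            extFun V θ x₀s (fun i => φ ((θ.symm i : ↥V) : W)) x = φ x := by
          intro x hx
          rw [extFun_mem θ x₀s _ hx]
          simp
        refine ⟨fun i => φ ((θ.symm i : ↥V) : W), ?_, mapFormula_congr' F hagree⟩
        rw [Finset.mem_coe, hEmbDef, Finset.mem_filter]
        exact ⟨Finset.mem_univ _, by rw [mapFormula_congr' F hagree]; exact hsubG⟩
      have h1 : copyCount F G ≤ Emb.card := by
        calc copyCount F G
            = Set.ncard {G' : SatFormula (Fin n) | G' ⊆ G ∧ IsCopyOf F G'} := rfl
          _ ≤ Set.ncard ((fun e => mapFormula (extFun V θ x₀s e) F) '' ↑Emb) :=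
              Set.ncard_le_ncard hsub (Set.toFinite _)
          _ ≤ Set.ncard (↑Emb : Set (Fin v → Fin n)) := Set.ncard_image_le (Set.toFinite _)
          _ = Emb.card := Set.ncard_coe_finset _
      calc ε * (n:ℝ) ^ v ≤ (copyCount F G : ℝ) := hcnt
        _ ≤ (Emb.card : ℝ) := by exact_mod_cast h1
    -- the box count
    set Good0 : Finset ((Fin v → Fin n) × (Fin v → Fin n)) :=
      Finset.univ.filter (fun ab : (Fin v → Fin n) × (Fin v → Fin n) =>
        ∀ σ : Fin v → Fin 2, (fun i => if σ i = 0 then ab.1 i else ab.2 i) ∈ Emb)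
      with hGood0Def
    have hbox : ((Emb.card : ℝ)) ^ (2 ^ v) * (n : ℝ) ^ (2 * v) ≤
        (Good0.card : ℝ) * (n : ℝ) ^ (v * 2 ^ v) := by
      rw [hGood0Def]
      exact boxCard n v Emb
    have hGood0card : K * (n:ℝ) ^ (2 * v) ≤ (Good0.card : ℝ) := by
      have h1 : (ε * (n:ℝ) ^ v) ^ (2 ^ v) ≤ ((Emb.card : ℝ)) ^ (2 ^ v) :=
        pow_le_pow_left₀ (by positivity) hEmbS _
      have h2 : (ε * (n:ℝ) ^ v) ^ (2 ^ v) = K * (n:ℝ) ^ (v * 2 ^ v) := by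
        rw [mul_pow, ← pow_mul, hKdef]
      have h4 : (K * (n:ℝ) ^ (2 * v)) * (n:ℝ) ^ (v * 2 ^ v)
          ≤ (Good0.card : ℝ) * (n:ℝ) ^ (v * 2 ^ v) := by
        calc (K * (n:ℝ) ^ (2 * v)) * (n:ℝ) ^ (v * 2 ^ v)
            = (K * (n:ℝ) ^ (v * 2 ^ v)) * (n:ℝ) ^ (2 * v) := by ring
          _ = (ε * (n:ℝ) ^ v) ^ (2 ^ v) * (n:ℝ) ^ (2 * v) := by rw [h2]
          _ ≤ ((Emb.card : ℝ)) ^ (2 ^ v) * (n:ℝ) ^ (2 * v) :=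
              mul_le_mul_of_nonneg_right h1 (by positivity)
          _ ≤ (Good0.card : ℝ) * (n:ℝ) ^ (v * 2 ^ v) := hbox
      exact le_of_mul_le_mul_right h4 (by positivity)
    -- injective pairs
    set Good : Finset ((Fin v → Fin n) × (Fin v → Fin n)) :=
      Good0.filter (fun ab => Function.Injective (xiFun ab)) with hGoodDef
    set Bad : Finset ((Fin v → Fin n) × (Fin v → Fin n)) :=
      Finset.univ.filter (fun ab => ¬ Function.Injective (xiFun ab)) with hBadDef
    have hsplit : Good0.card ≤ Good.card + Bad.card := by
      have hsub : Good0 ⊆ Good ∪ Bad := by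
        intro ab hab
        by_cases h : Function.Injective (xiFun ab)
        · exact Finset.mem_union_left _ (Finset.mem_filter.mpr ⟨hab, h⟩)
        · exact Finset.mem_union_right _ (Finset.mem_filter.mpr ⟨Finset.mem_univ _, h⟩)
      exact le_trans (Finset.card_le_card hsub) (Finset.card_union_le _ _)
    have hpair : ∀ pq : (Fin v × Fin 2) × (Fin v × Fin 2), pq.1 ≠ pq.2 →
        ((Finset.univ.filter (fun ab : (Fin v → Fin n) × (Fin v → Fin n) =>
          xiFun ab pq.1 = xiFun ab pq.2)).card ≤ n ^ (2 * v - 1)) := by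
      intro pq hne
      have hcard : Fintype.card {x : Fin v × Fin 2 // ¬ x = pq.2} = 2 * v - 1 := by
        rw [Fintype.card_subtype_compl, Fintype.card_subtype_eq]
        rw [Fintype.card_prod, Fintype.card_fin, Fintype.card_fin]
        omega
      have hinjOn : Set.InjOn
          (fun ab : (Fin v → Fin n) × (Fin v → Fin n) =>
            (fun x : {x : Fin v × Fin 2 // ¬ x = pq.2} => xiFun ab x.val))
          ↑(Finset.univ.filter (fun ab : (Fin v → Fin n) × (Fin v → Fin n) =>
            xiFun ab pq.1 = xiFun ab pq.2)) := by
        intro ab hab ab' hab' hEq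
        have h1 : xiFun ab pq.1 = xiFun ab pq.2 :=
          (Finset.mem_filter.mp (Finset.mem_coe.mp hab)).2
        have h1' : xiFun ab' pq.1 = xiFun ab' pq.2 :=
          (Finset.mem_filter.mp (Finset.mem_coe.mp hab')).2
        apply xiFun_injective
        funext x
        by_cases hx : x = pq.2
        · rw [hx]
          calc xiFun ab pq.2 = xiFun ab pq.1 := h1.symm
            _ = xiFun ab' pq.1 := congrFun hEq ⟨pq.1, hne⟩
            _ = xiFun ab' pq.2 := h1'
        · exact congrFun hEq ⟨x, hx⟩
      calc (Finset.univ.filter (fun ab : (Fin v → Fin n) × (Fin v → Fin n) =>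
              xiFun ab pq.1 = xiFun ab pq.2)).card
          ≤ (Finset.univ : Finset ({x : Fin v × Fin 2 // ¬ x = pq.2} → Fin n)).card :=
            Finset.card_le_card_of_injOn _ (fun ab _ => Finset.mem_univ _) hinjOn
        _ = n ^ (2 * v - 1) := by
            rw [Finset.card_univ, Fintype.card_fun, hcard, Fintype.card_fin]
    have hBadsub : Bad ⊆ (Finset.univ : Finset (Fin v × Fin 2)).offDiag.biUnion
        (fun pq => Finset.univ.filter (fun ab : (Fin v → Fin n) × (Fin v → Fin n) =>
          xiFun ab pq.1 = xiFun ab pq.2)) := by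
      intro ab hab
      have h := (Finset.mem_filter.mp hab).2
      rw [Function.not_injective_iff] at h
      obtain ⟨p, q, hpq, hneq⟩ := h
      exact Finset.mem_biUnion.mpr ⟨(p, q),
        Finset.mem_offDiag.mpr ⟨Finset.mem_univ _, Finset.mem_univ _, hneq⟩,
        Finset.mem_filter.mpr ⟨Finset.mem_univ _, hpq⟩⟩
    have hBadNat : Bad.card ≤ (2 * v) ^ 2 * n ^ (2 * v - 1) := by
      calc Bad.card
          ≤ ((Finset.univ : Finset (Fin v × Fin 2)).offDiag.biUnion
            (fun pq => Finset.univ.filter (fun ab : (Fin v → Fin n) × (Fin v → Fin n) =>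
              xiFun ab pq.1 = xiFun ab pq.2))).card := Finset.card_le_card hBadsub
        _ ≤ ∑ pq ∈ (Finset.univ : Finset (Fin v × Fin 2)).offDiag,
            (Finset.univ.filter (fun ab : (Fin v → Fin n) × (Fin v → Fin n) =>
              xiFun ab pq.1 = xiFun ab pq.2)).card := Finset.card_biUnion_le
        _ ≤ ∑ _pq ∈ (Finset.univ : Finset (Fin v × Fin 2)).offDiag, n ^ (2 * v - 1) :=
            Finset.sum_le_sum fun pq hpq => hpair pq (Finset.mem_offDiag.mp hpq).2.2
        _ = (Finset.univ : Finset (Fin v × Fin 2)).offDiag.card * n ^ (2 * v - 1) := by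
            rw [Finset.sum_const, smul_eq_mul]
        _ ≤ (2 * v) ^ 2 * n ^ (2 * v - 1) := by
            refine Nat.mul_le_mul_right _ ?_
            rw [Finset.offDiag_card, Finset.card_univ, Fintype.card_prod,
              Fintype.card_fin, Fintype.card_fin]
            calc v * 2 * (v * 2) - v * 2 ≤ v * 2 * (v * 2) := Nat.sub_le _ _
              _ = (2 * v) ^ 2 := by ring
    have hGoodLB : K / 2 * (n:ℝ) ^ (2 * v) ≤ (Good.card : ℝ) := by
      have hstep : (((2 * v) ^ 2 : ℕ) : ℝ) * (n:ℝ) ^ (2 * v - 1)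
          ≤ K / 2 * (n:ℝ) ^ (2 * v) := by
        have hpow : (n:ℝ) ^ (2 * v) = (n:ℝ) * (n:ℝ) ^ (2 * v - 1) := by
          rw [← pow_succ']
          congr 1
          omega
        rw [hpow, ← mul_assoc]
        refine mul_le_mul_of_nonneg_right ?_ (by positivity)
        rw [div_lt_iff₀ hK0] at hNlarge
        have hcast : (((2 * v) ^ 2 : ℕ) : ℝ) = ((2 * v : ℕ) : ℝ) ^ 2 := by push_cast; ring
        rw [hcast]
        nlinarith [hK0, h2v0]
      have hsplit' : (Good0.card : ℝ) ≤ (Good.card : ℝ) + (Bad.card : ℝ) := by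
        exact_mod_cast hsplit
      have hBad' : (Bad.card : ℝ) ≤ (((2 * v) ^ 2 : ℕ) : ℝ) * (n:ℝ) ^ (2 * v - 1) := by
        have := hBadNat
        calc (Bad.card : ℝ) ≤ (((2 * v) ^ 2 * n ^ (2 * v - 1) : ℕ) : ℝ) := by exact_mod_cast this
          _ = (((2 * v) ^ 2 : ℕ) : ℝ) * (n:ℝ) ^ (2 * v - 1) := by push_cast; ring
      linarith [hGood0card]
    -- from good pairs to copies of the blowup
    set Φ : ((Fin v → Fin n) × (Fin v → Fin n)) → (W × Fin 2) → Fin n :=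
      fun ab => phiFun V θ x₀s (xiFun ab) with hΦdef
    set Γ : ((Fin v → Fin n) × (Fin v → Fin n)) → SatFormula (Fin n) :=
      fun ab => mapFormula (Φ ab) (formulaBlowup 2 F) with hΓdef
    have hsection : ∀ ab ∈ Good, ∀ s : W → Fin 2,
        mapFormula (fun x => Φ ab (x, s x)) F ⊆ G := by
      intro ab hab s
      set σ : Fin v → Fin 2 := fun i => s ((θ.symm i : ↥V) : W) with hσdef
      have hmem : (fun i => if σ i = 0 then ab.1 i else ab.2 i) ∈ Emb :=
        (Finset.mem_filter.mp (Finset.mem_filter.mp hab).1).2 σ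
      have hsubG : mapFormula
          (extFun V θ x₀s (fun i => if σ i = 0 then ab.1 i else ab.2 i)) F ⊆ G :=
        (Finset.mem_filter.mp hmem).2
      have hagree : ∀ x ∈ formulaVars F, (fun x => Φ ab (x, s x)) x =
          extFun V θ x₀s (fun i => if σ i = 0 then ab.1 i else ab.2 i) x := by
        intro x hx
        rw [extFun_mem θ x₀s _ hx]
        show Φ ab (x, s x) = if σ (θ ⟨x, hx⟩) = 0 then ab.1 (θ ⟨x, hx⟩) else ab.2 (θ ⟨x, hx⟩)
        simp only [hΦdef]
        rw [phiFun_mem θ x₀s (xiFun ab) (p := (x, s x)) hx]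
        rw [hσdef]
        simp [xiFun]
      rw [mapFormula_congr' F hagree]
      exact hsubG
    have hΓsub : ∀ ab ∈ Good, Γ ab ⊆ G := by
      intro ab hab CC hCC
      rw [hΓdef] at hCC
      obtain ⟨D, hD, rfl⟩ := Finset.mem_image.mp hCC
      obtain ⟨C, hC, hDC⟩ := Finset.mem_biUnion.mp hD
      obtain ⟨s, hs⟩ := blowclause_image' (Φ ab) C (clause_fst_injOn (hF C hC)) D hDC
      rw [hs]
      exact hsection ab hab s (Finset.mem_image_of_mem _ hC)
    have hΓcopy : ∀ ab ∈ Good, IsCopyOf (formulaBlowup 2 F) (Γ ab) := by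
      intro ab hab
      refine ⟨Φ ab, ?_, rfl⟩
      rw [formulaVars_blowup']
      intro p hp q hq hpq
      have hp1 : p.1 ∈ V := (Finset.mem_product.mp (Finset.mem_coe.mp hp)).1
      have hq1 : q.1 ∈ V := (Finset.mem_product.mp (Finset.mem_coe.mp hq)).1
      have hinj : Function.Injective (xiFun ab) := (Finset.mem_filter.mp hab).2
      simp only [hΦdef] at hpq
      rw [phiFun_mem θ x₀s (xiFun ab) (p := p) hp1,
        phiFun_mem θ x₀s (xiFun ab) (p := q) hq1] at hpq
      have heq := hinj hpq
      have h1 : θ ⟨p.1, hp1⟩ = θ ⟨q.1, hq1⟩ := (Prod.mk.injEq _ _ _ _ ▸ heq).1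
      have h2 : p.2 = q.2 := (Prod.mk.injEq _ _ _ _ ▸ heq).2
      have h3 : p.1 = q.1 := congrArg Subtype.val (θ.injective h1)
      exact Prod.ext h3 h2
    have hVars : ∀ ab, formulaVars (Γ ab) = Finset.univ.image (xiFun ab) := by
      intro ab
      rw [hΓdef]
      show formulaVars (mapFormula (Φ ab) (formulaBlowup 2 F)) = _
      rw [formulaVars_mapFormula', formulaVars_blowup']
      ext y
      simp only [Finset.mem_image]
      constructor
      · rintro ⟨p, hp, rfl⟩
        have hp1 : p.1 ∈ V := (Finset.mem_product.mp hp).1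
        exact ⟨(θ ⟨p.1, hp1⟩, p.2), Finset.mem_univ _,
          (by simp only [hΦdef]; rw [phiFun_mem θ x₀s (xiFun ab) (p := p) hp1])⟩
      · rintro ⟨q, -, rfl⟩
        refine ⟨(((θ.symm q.1 : ↥V) : W), q.2), ?_, ?_⟩
        · exact Finset.mem_product.mpr ⟨(θ.symm q.1).2, Finset.mem_univ _⟩
        · simp only [hΦdef]
          rw [phiFun_mem (p := (((θ.symm q.1 : ↥V) : W), q.2)) θ x₀s (xiFun ab) (θ.symm q.1).2]
          simp
    have hfiber : ∀ G'' ∈ Good.image Γ,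
        (Good.filter (fun ab => Γ ab = G'')).card ≤ (2 * v) ^ (2 * v) := by
      intro G'' _
      rcases Finset.eq_empty_or_nonempty (Good.filter (fun ab => Γ ab = G'')) with he | hne
      · rw [he]; simp
      obtain ⟨ab₀, hab₀⟩ := hne
      have hT : formulaVars G'' = Finset.univ.image (xiFun ab₀) := by
        rw [← (Finset.mem_filter.mp hab₀).2, hVars]
      have hTcard : (formulaVars G'').card ≤ 2 * v := by
        rw [hT]
        calc (Finset.univ.image (xiFun ab₀)).card ≤ (Finset.univ : Finset (Fin v × Fin 2)).card :=
            Finset.card_image_le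
          _ = 2 * v := by
              rw [Finset.card_univ, Fintype.card_prod, Fintype.card_fin, Fintype.card_fin]; ring
      have hmaps : ∀ ab ∈ Good.filter (fun ab => Γ ab = G''),
          xiFun ab ∈ Fintype.piFinset (fun _ : Fin v × Fin 2 => formulaVars G'') := by
        intro ab hab
        refine Fintype.mem_piFinset.mpr fun p => ?_
        rw [show formulaVars G'' = Finset.univ.image (xiFun ab) from by
          rw [← (Finset.mem_filter.mp hab).2, hVars]]
        exact Finset.mem_image_of_mem _ (Finset.mem_univ p)
      calc (Good.filter (fun ab => Γ ab = G'')).card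
          ≤ (Fintype.piFinset (fun _ : Fin v × Fin 2 => formulaVars G'')).card :=
            Finset.card_le_card_of_injOn xiFun hmaps (xiFun_injective.injOn)
        _ = (formulaVars G'').card ^ (2 * v) := by
            rw [Fintype.card_piFinset]
            rw [Finset.prod_const, Finset.card_univ, Fintype.card_prod,
              Fintype.card_fin, Fintype.card_fin]
            rw [show v * 2 = 2 * v from by ring]
        _ ≤ (2 * v) ^ (2 * v) := Nat.pow_le_pow_left hTcard _
    have hGoodimg : Good.card ≤ (2 * v) ^ (2 * v) * (Good.image Γ).card :=
      Finset.card_le_mul_card_image (f := Γ) Good ((2 * v) ^ (2 * v)) hfiber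
    have hcopies2 : ((Good.image Γ).card : ℝ) ≤ (copyCount (formulaBlowup 2 F) G : ℝ) := by
      have hsub : ↑(Good.image Γ) ⊆ {G' : SatFormula (Fin n) | G' ⊆ G ∧
          IsCopyOf (formulaBlowup 2 F) G'} := by
        intro G'' hG''
        obtain ⟨ab, hab, rfl⟩ := Finset.mem_image.mp (Finset.mem_coe.mp hG'')
        exact ⟨hΓsub ab hab, hΓcopy ab hab⟩
      have h := Set.ncard_le_ncard hsub (Set.toFinite _)
      rw [Set.ncard_coe_finset] at h
      exact_mod_cast h
    -- final arithmetic
    have hGimg : (Good.card : ℝ) ≤ M * ((Good.image Γ).card : ℝ) := by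
      have : ((Good.card : ℕ) : ℝ) ≤ (((2 * v) ^ (2 * v) * (Good.image Γ).card : ℕ) : ℝ) := by
        exact_mod_cast hGoodimg
      calc (Good.card : ℝ) ≤ (((2 * v) ^ (2 * v) * (Good.image Γ).card : ℕ) : ℝ) := this
        _ = M * ((Good.image Γ).card : ℝ) := by rw [hMdef]; push_cast; ring
    calc K / (2 * M) * (n:ℝ) ^ (2 * v) = (K / 2 * (n:ℝ) ^ (2 * v)) / M := by
          rw [← div_div, div_mul_eq_mul_div]
      _ ≤ (copyCount (formulaBlowup 2 F) G : ℝ) := by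
          rw [div_le_iff₀ hM0]
          calc K / 2 * (n:ℝ) ^ (2 * v) ≤ (Good.card : ℝ) := hGoodLB
            _ ≤ M * ((Good.image Γ).card : ℝ) := hGimg
            _ ≤ M * (copyCount (formulaBlowup 2 F) G : ℝ) :=
                mul_le_mul_of_nonneg_left hcopies2 hM0.le
            _ = (copyCount (formulaBlowup 2 F) G : ℝ) * M := by ring
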